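/- In a rooted tree on n vertices, if two vertices x, y are drawn independently uniformly at random and v is their lowest common ancestor, then E[I(v)] >= (2/3) * n, where I(v) is the size of the subtree rooted at v. -/

import Mathlib

open Finset
open scoped Classical

/-- A rooted tree on `n` vertices: every vertex has a parent, the root is a fixed
point of the parent map, and every vertex reaches the root by iterating `parent`.
Edges are directed from a non-root vertex to its parent. -/
structure ParentTree (n : ℕ) where
  parent : Fin n → Fin n
  root : Fin n
  root_fixed : parent root = root
  reaches : ∀ v, ∃ k, parent^[k] v = root

namespace ParentTree

variable {n : ℕ}

/-- `T.Anc v u` : `v` is an ancestor of `u` (possibly `v = u`). -/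
def Anc (T : ParentTree n) (v u : Fin n) : Prop := ∃ k, T.parent^[k] u = v

/-- The size of the subtree rooted at `v` (including `v`). -/
noncomputable def subSize (T : ParentTree n) (v : Fin n) : ℕ :=
  (Finset.univ.filter fun u => T.Anc v u).card

/-- The children of `v` (its in-neighbours). -/
noncomputable def children (T : ParentTree n) (v : Fin n) : Finset (Fin n) :=
  Finset.univ.filter fun u => T.parent u = v ∧ u ≠ v

/-- `v` is the lowest common ancestor of `x` and `y`. -/
def IsLCA (T : ParentTree n) (v x y : Fin n) : Prop :=
  T.Anc v x ∧ T.Anc v y ∧ ∀ w, T.Anc w x → T.Anc w y → T.Anc w v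

/-- The quantity `f(T) = ∑_{v ≠ root} I(v)² (I(parent v) - I(v))`. -/
noncomputable def fval (T : ParentTree n) : ℝ :=
  ∑ v ∈ Finset.univ.filter (· ≠ T.root),
    (T.subSize v : ℝ) ^ 2 * ((T.subSize (T.parent v) : ℝ) - (T.subSize v : ℝ))

/-- A rooted tree is a path if every vertex has at most one child. -/
def IsPathTree (T : ParentTree n) : Prop :=
  ∀ v w, v ≠ T.root → w ≠ T.root → T.parent v = T.parent w → v = w

end ParentTree

namespace ParentTree

variable {n : ℕ}

variable (T : ParentTree n)

lemma anc_refl (v : Fin n) : T.Anc v v := ⟨0, rfl⟩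

lemma anc_trans {a b c : Fin n} (h1 : T.Anc a b) (h2 : T.Anc b c) : T.Anc a c := by
  obtain ⟨j, hj⟩ := h1; obtain ⟨k, hk⟩ := h2
  exact ⟨j + k, by rw [Function.iterate_add_apply, hk, hj]⟩

lemma root_iterate (k : ℕ) : T.parent^[k] T.root = T.root := by
  induction k with
  | zero => rfl
  | succ k ih => rw [Function.iterate_succ_apply', ih, T.root_fixed]

lemma eq_root_of_cycle {v : Fin n} {m : ℕ} (hm : 0 < m) (h : T.parent^[m] v = v) :
    v = T.root := by
  obtain ⟨j, hj⟩ := T.reaches v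
  have hcyc : ∀ t, T.parent^[m * t] v = v := by
    intro t
    induction t with
    | zero => rfl
    | succ t ih => rw [Nat.mul_succ, Function.iterate_add_apply, h, ih]
  have hle : j ≤ m * j := Nat.le_mul_of_pos_left j hm
  calc v = T.parent^[m * j] v := (hcyc j).symm
    _ = T.parent^[m * j - j] (T.parent^[j] v) := by
        rw [← Function.iterate_add_apply]; congr 1; omega
    _ = T.root := by rw [hj, root_iterate]

lemma anc_antisymm {a b : Fin n} (h1 : T.Anc a b) (h2 : T.Anc b a) : a = b := by
  obtain ⟨j, hj⟩ := h1; obtain ⟨k, hk⟩ := h2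
  rcases Nat.eq_zero_or_pos (k + j) with h | h
  · have : k = 0 := by omega
    simpa [this] using hk
  · have hcyc : T.parent^[k + j] b = b := by
      rw [Function.iterate_add_apply, hj, hk]
    have hb := T.eq_root_of_cycle h hcyc
    subst hb
    rw [root_iterate] at hj
    exact hj.symm
  
lemma anc_root (u : Fin n) : T.Anc T.root u := T.reaches u

lemma anc_total {v w u : Fin n} (h1 : T.Anc v u) (h2 : T.Anc w u) :
    T.Anc v w ∨ T.Anc w v := by
  obtain ⟨j, hj⟩ := h1; obtain ⟨k, hk⟩ := h2
  rcases le_total k j with h | h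
  · left
    refine ⟨j - k, ?_⟩
    rw [← hk, ← Function.iterate_add_apply, ← hj]; congr 1; omega
  · right
    refine ⟨k - j, ?_⟩
    rw [← hj, ← Function.iterate_add_apply, ← hk]; congr 1; omega

lemma exists_child_anc {v u : Fin n} (hne : u ≠ v) (h : T.Anc v u) :
    ∃ c ∈ T.children v, T.Anc c u := by
  obtain ⟨k, hk⟩ := h
  induction k with
  | zero => exact absurd hk hne
  | succ k ih =>
    rw [Function.iterate_succ_apply'] at hk
    by_cases hc : T.parent^[k] u = v
    · exact ih hc
    · refine ⟨T.parent^[k] u, ?_, ⟨k, rfl⟩⟩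
      simp [children, hk, hc]

lemma children_disjoint {v c c' x : Fin n} (hc : c ∈ T.children v) (hc' : c' ∈ T.children v)
    (hne : c ≠ c') (h1 : T.Anc c x) (h2 : T.Anc c' x) : False := by
  simp only [children, mem_filter, mem_univ, true_and] at hc hc'
  -- wlog via anc_total
  rcases T.anc_total h1 h2 with h | h
  · -- Anc c c' : ∃ k, p^[k] c' = c, k ≥ 1
    obtain ⟨k, hk⟩ := h
    rcases Nat.eq_zero_or_pos k with h0 | h0
    · exact hne (by simpa [h0] using hk.symm)
    · have hkv : T.parent^[k] v = v := by
        have : T.parent^[k] (T.parent c') = T.parent (T.parent^[k] c') := by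
          rw [← Function.iterate_succ_apply, Function.iterate_succ_apply']
        rw [hc'.1] at this
        rw [this, hk, hc.1]
      have hv := T.eq_root_of_cycle h0 hkv
      -- then c = p^[k-1] v = root = v, contradiction with hc.2
      have : T.parent^[k - 1] v = c := by
        have := hk
        rw [show k = (k-1) + 1 by omega, Function.iterate_add_apply] at this
        simpa [hc'.1] using this
      rw [hv, root_iterate] at this
      exact hc.2 (by rw [← this, ← hv])
  · obtain ⟨k, hk⟩ := h
    rcases Nat.eq_zero_or_pos k with h0 | h0
    · exact hne (by simpa [h0] using hk)
    · have hkv : T.parent^[k] v = v := by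
        have : T.parent^[k] (T.parent c) = T.parent (T.parent^[k] c) := by
          rw [← Function.iterate_succ_apply, Function.iterate_succ_apply']
        rw [hc.1] at this
        rw [this, hk, hc'.1]
      have hv := T.eq_root_of_cycle h0 hkv
      have : T.parent^[k - 1] v = c' := by
        have := hk
        rw [show k = (k-1) + 1 by omega, Function.iterate_add_apply] at this
        simpa [hc.1] using this
      rw [hv, root_iterate] at this
      exact hc'.2 (by rw [← this, ← hv])

lemma anc_of_child {v c u : Fin n} (hc : c ∈ T.children v) (h : T.Anc c u) : T.Anc v u := by
  simp only [children, mem_filter, mem_univ, true_and] at hc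
  exact T.anc_trans ⟨1, by simpa using hc.1⟩ h

lemma subSize_root : T.subSize T.root = n := by
  have : (Finset.univ.filter fun u => T.Anc T.root u) = Finset.univ := by
    ext u; simp [T.anc_root u]
  simp [subSize, this]

lemma sum_children_subSize_le (v : Fin n) :
    ∑ c ∈ T.children v, T.subSize c ≤ T.subSize v := by
  classical
  rw [show ∑ c ∈ T.children v, T.subSize c =
      ((T.children v).biUnion fun c => Finset.univ.filter fun u => T.Anc c u).card from
    (Finset.card_biUnion fun c hc c' hc' hne => by
      rw [Function.onFun, Finset.disjoint_left]
      intro a ha ha'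
      simp only [mem_filter, mem_univ, true_and] at ha ha'
      exact T.children_disjoint hc hc' hne ha ha').symm]
  apply Finset.card_le_card
  intro u hu
  simp only [Finset.mem_biUnion, mem_filter, mem_univ, true_and] at hu ⊢
  obtain ⟨c, hc, hcu⟩ := hu
  exact T.anc_of_child hc hcu

lemma parent_eq_self_iff (u : Fin n) : T.parent u = u ↔ u = T.root := by
  constructor
  · intro h; exact T.eq_root_of_cycle (m := 1) one_pos (by simpa using h)
  · rintro rfl; exact T.root_fixed

lemma fiber_eq_children (v : Fin n) :
    (Finset.univ.filter (· ≠ T.root)).filter (fun u => T.parent u = v) = T.children v := by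
  ext u
  simp only [children, mem_filter, mem_univ, true_and]
  constructor
  · rintro ⟨hu, hp⟩
    refine ⟨hp, ?_⟩
    rintro rfl
    exact hu ((T.parent_eq_self_iff u).1 hp)
  · rintro ⟨hp, hu⟩
    refine ⟨?_, hp⟩
    rintro rfl
    exact hu (by rw [← hp, T.root_fixed])

lemma sum_children_reindex (F : Fin n → ℝ) :
    ∑ v : Fin n, ∑ c ∈ T.children v, F c
      = ∑ w ∈ Finset.univ.filter (· ≠ T.root), F w := by
  rw [← Finset.sum_fiberwise_of_maps_to (g := T.parent)
    (s := Finset.univ.filter (· ≠ T.root)) (t := Finset.univ) (fun x _ => mem_univ _) F]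
  exact Finset.sum_congr rfl fun v _ => by rw [fiber_eq_children]

lemma indicator_lca (v x y : Fin n) :
    (if T.IsLCA v x y then (1:ℝ) else 0) =
      (if T.Anc v x then (1:ℝ) else 0) * (if T.Anc v y then (1:ℝ) else 0)
        - ∑ c ∈ T.children v,
            (if T.Anc c x then (1:ℝ) else 0) * (if T.Anc c y then (1:ℝ) else 0) := by
  by_cases hx : T.Anc v x
  · by_cases hy : T.Anc v y
    · by_cases hlca : T.IsLCA v x y
      · have hz : ∑ c ∈ T.children v,
            (if T.Anc c x then (1:ℝ) else 0) * (if T.Anc c y then (1:ℝ) else 0) = 0 := by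
          apply Finset.sum_eq_zero
          intro c hc
          by_cases hcx : T.Anc c x
          · by_cases hcy : T.Anc c y
            · exfalso
              have hcv : T.Anc c v := hlca.2.2 c hcx hcy
              have hvc : T.Anc v c := by
                simp only [children, mem_filter, mem_univ, true_and] at hc
                exact ⟨1, by simpa using hc.1⟩
              have := T.anc_antisymm hcv hvc
              simp only [children, mem_filter, mem_univ, true_and] at hc
              exact hc.2 this
            · simp [hcy]
          · simp [hcx]
        rw [if_pos hlca, if_pos hx, if_pos hy, hz]; ring
      · -- some child contains both x and y
        have hex : ∃ c ∈ T.children v, T.Anc c x ∧ T.Anc c y := by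
          simp only [IsLCA, not_and_or] at hlca
          rcases hlca with h | h | h
          · exact absurd hx h
          · exact absurd hy h
          · push_neg at h
            obtain ⟨w, hwx, hwy, hwv⟩ := h
            have hvw : T.Anc v w := by
              rcases T.anc_total hwx hx with h' | h'
              · exact absurd h' hwv
              · exact h'
            have hwne : w ≠ v := by rintro rfl; exact hwv (T.anc_refl w)
            obtain ⟨c, hc, hcw⟩ := T.exists_child_anc hwne hvw
            exact ⟨c, hc, T.anc_trans hcw hwx, T.anc_trans hcw hwy⟩
        obtain ⟨c0, hc0, hc0x, hc0y⟩ := hex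
        have hsum : ∑ c ∈ T.children v,
            (if T.Anc c x then (1:ℝ) else 0) * (if T.Anc c y then (1:ℝ) else 0) = 1 := by
          rw [Finset.sum_eq_single_of_mem c0 hc0]
          · simp [hc0x, hc0y]
          · intro c hc hne
            by_cases hcx : T.Anc c x
            · exact absurd (T.children_disjoint hc hc0 hne hcx hc0x) (fun h => h)
            · simp [hcx]
        rw [if_neg hlca, if_pos hx, if_pos hy, hsum]; ring
    · have hz : ∀ c ∈ T.children v,
          (if T.Anc c x then (1:ℝ) else 0) * (if T.Anc c y then (1:ℝ) else 0) = 0 := by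
        intro c hc
        by_cases hcy : T.Anc c y
        · exact absurd (T.anc_of_child hc hcy) hy
        · simp [hcy]
      have : ¬ T.IsLCA v x y := fun h => hy h.2.1
      rw [if_neg this, if_neg hy, Finset.sum_eq_zero hz]; ring
  · have hz : ∀ c ∈ T.children v,
        (if T.Anc c x then (1:ℝ) else 0) * (if T.Anc c y then (1:ℝ) else 0) = 0 := by
      intro c hc
      by_cases hcx : T.Anc c x
      · exact absurd (T.anc_of_child hc hcx) hx
      · simp [hcx]
    have : ¬ T.IsLCA v x y := fun h => hx h.1
    rw [if_neg this, if_neg hx, Finset.sum_eq_zero hz]; ring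

lemma pair_count (v : Fin n) :
    ∑ x : Fin n, ∑ y : Fin n, (if T.IsLCA v x y then (1:ℝ) else 0)
      = (T.subSize v : ℝ) ^ 2 - ∑ c ∈ T.children v, (T.subSize c : ℝ) ^ 2 := by
  have hind : ∀ w : Fin n, ∑ x : Fin n, (if T.Anc w x then (1:ℝ) else 0) = (T.subSize w : ℝ) := by
    intro w
    rw [Finset.sum_boole]
    simp [subSize]
  calc ∑ x : Fin n, ∑ y : Fin n, (if T.IsLCA v x y then (1:ℝ) else 0)
      = ∑ x : Fin n, ∑ y : Fin n,
          ((if T.Anc v x then (1:ℝ) else 0) * (if T.Anc v y then (1:ℝ) else 0)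
            - ∑ c ∈ T.children v,
                (if T.Anc c x then (1:ℝ) else 0) * (if T.Anc c y then (1:ℝ) else 0)) := by
        exact Finset.sum_congr rfl fun x _ => Finset.sum_congr rfl fun y _ => T.indicator_lca v x y
    _ = (∑ x : Fin n, (if T.Anc v x then (1:ℝ) else 0))
          * (∑ y : Fin n, (if T.Anc v y then (1:ℝ) else 0))
        - ∑ c ∈ T.children v,
            (∑ x : Fin n, (if T.Anc c x then (1:ℝ) else 0))
              * (∑ y : Fin n, (if T.Anc c y then (1:ℝ) else 0)) := by
        rw [Finset.sum_mul_sum]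
        simp only [Finset.sum_sub_distrib]
        congr 1
        rw [show (∑ x : Fin n, ∑ y : Fin n, ∑ c ∈ T.children v,
              (if T.Anc c x then (1:ℝ) else 0) * (if T.Anc c y then (1:ℝ) else 0))
            = ∑ c ∈ T.children v, ∑ x : Fin n, ∑ y : Fin n,
              (if T.Anc c x then (1:ℝ) else 0) * (if T.Anc c y then (1:ℝ) else 0) from by
          rw [show (∑ x : Fin n, ∑ y : Fin n, ∑ c ∈ T.children v,
                (if T.Anc c x then (1:ℝ) else 0) * (if T.Anc c y then (1:ℝ) else 0))
              = ∑ x : Fin n, ∑ c ∈ T.children v, ∑ y : Fin n,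
                (if T.Anc c x then (1:ℝ) else 0) * (if T.Anc c y then (1:ℝ) else 0) from
            Finset.sum_congr rfl fun x _ => Finset.sum_comm]
          exact Finset.sum_comm]
        exact Finset.sum_congr rfl fun c _ => (Finset.sum_mul_sum _ _ _ _).symm
    _ = (T.subSize v : ℝ) ^ 2 - ∑ c ∈ T.children v, (T.subSize c : ℝ) ^ 2 := by
        simp only [hind]; ring


lemma superadd {ι : Type*} {b : ℝ} {s : Finset ι} {g : ι → ℝ}
    (hg : ∀ i ∈ s, 0 ≤ g i) (hsum : ∑ i ∈ s, g i ≤ b) :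
    ∑ i ∈ s, (3 * b * (g i) ^ 2 - 2 * (g i) ^ 3)
      ≤ 3 * b * (∑ i ∈ s, g i) ^ 2 - 2 * (∑ i ∈ s, g i) ^ 3 := by
  classical
  induction s using Finset.induction with
  | empty => simp
  | @insert a s' ha ih =>
    rw [Finset.sum_insert ha] at hsum ⊢
    rw [Finset.sum_insert ha]
    have hga : 0 ≤ g a := hg a (mem_insert_self a s')
    have hg' : ∀ i ∈ s', 0 ≤ g i := fun i hi => hg i (mem_insert_of_mem hi)
    have hS : 0 ≤ ∑ i ∈ s', g i := Finset.sum_nonneg hg'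
    have hsum' : ∑ i ∈ s', g i ≤ b := le_trans (by linarith) hsum
    have := ih hg' hsum'
    set S := ∑ i ∈ s', g i
    have key : 3 * b * (g a) ^ 2 - 2 * (g a) ^ 3 + (3 * b * S ^ 2 - 2 * S ^ 3)
        ≤ 3 * b * (g a + S) ^ 2 - 2 * (g a + S) ^ 3 := by
      nlinarith [mul_nonneg (mul_nonneg hga hS) (sub_nonneg.2 hsum)]
    linarith

lemma cube_ineq {ι : Type*} {b : ℝ} (hb : 0 ≤ b) {s : Finset ι} {g : ι → ℝ}
    (hg : ∀ i ∈ s, 0 ≤ g i) (hsum : ∑ i ∈ s, g i ≤ b) :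
    3 * ∑ i ∈ s, b * (g i) ^ 2 ≤ b ^ 3 + 2 * ∑ i ∈ s, (g i) ^ 3 := by
  have h1 := superadd hg hsum
  have h2 : 3 * b * (∑ i ∈ s, g i) ^ 2 - 2 * (∑ i ∈ s, g i) ^ 3 ≤ b ^ 3 := by
    have hS : 0 ≤ ∑ i ∈ s, g i := Finset.sum_nonneg hg
    nlinarith [sq_nonneg (b - ∑ i ∈ s, g i)]
  have h3 : ∑ i ∈ s, (3 * b * (g i) ^ 2 - 2 * (g i) ^ 3)
      = 3 * ∑ i ∈ s, b * (g i) ^ 2 - 2 * ∑ i ∈ s, (g i) ^ 3 := by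
    rw [Finset.sum_sub_distrib, Finset.mul_sum, Finset.mul_sum]
    congr 1
    exact Finset.sum_congr rfl fun i _ => by ring
  linarith

end ParentTree

/-- If `x, y` are drawn independently and uniformly at random from a rooted tree
on `n` vertices and `v` is their lowest common ancestor, then `E[I(v)] ≥ (2/3)n`.
(The inner sum over the filter has exactly one term, the subtree size of the LCA
of `x` and `y`.) -/
theorem expected_lca_subSize_ge (n : ℕ) (hn : 0 < n) (T : ParentTree n) :
    (2 / 3 : ℝ) * n ≤
      (1 / (n : ℝ) ^ 2) * ∑ x : Fin n, ∑ y : Fin n,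
        ∑ v ∈ Finset.univ.filter (fun v => T.IsLCA v x y), (T.subSize v : ℝ) := by
  classical
  set I : Fin n → ℝ := fun v => (T.subSize v : ℝ) with hI
  have hInn : ∀ v, 0 ≤ I v := fun v => Nat.cast_nonneg _
  set S : ℝ := ∑ x : Fin n, ∑ y : Fin n,
      ∑ v ∈ Finset.univ.filter (fun v => T.IsLCA v x y), (T.subSize v : ℝ) with hSdef
  set A : ℝ := ∑ v : Fin n, I v ^ 3 with hA
  set B : ℝ := ∑ w ∈ Finset.univ.filter (· ≠ T.root), I w ^ 3 with hB
  set C : ℝ := ∑ v : Fin n, ∑ c ∈ T.children v, I v * I c ^ 2 with hC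
  -- Step 1 : S = A - C
  have hS : S = A - C := by
    have h1 : S = ∑ v : Fin n, I v * (∑ x : Fin n, ∑ y : Fin n,
        (if T.IsLCA v x y then (1:ℝ) else 0)) := by
      rw [hSdef]
      have : ∀ x y : Fin n,
          (∑ v ∈ Finset.univ.filter (fun v => T.IsLCA v x y), (T.subSize v : ℝ))
            = ∑ v : Fin n, I v * (if T.IsLCA v x y then (1:ℝ) else 0) := by
        intro x y
        rw [Finset.sum_filter]
        exact Finset.sum_congr rfl fun v _ => by split <;> simp [hI]
      simp only [this]
      rw [show (∑ x : Fin n, ∑ y : Fin n, ∑ v : Fin n, I v * (if T.IsLCA v x y then (1:ℝ) else 0))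
          = ∑ x : Fin n, ∑ v : Fin n, ∑ y : Fin n, I v * (if T.IsLCA v x y then (1:ℝ) else 0) from
        Finset.sum_congr rfl fun x _ => Finset.sum_comm]
      rw [Finset.sum_comm]
      refine Finset.sum_congr rfl fun v _ => ?_
      rw [Finset.mul_sum]
      exact Finset.sum_congr rfl fun x _ => (Finset.mul_sum _ _ _).symm
    rw [h1]
    have h2 : ∀ v : Fin n, I v * (∑ x : Fin n, ∑ y : Fin n,
        (if T.IsLCA v x y then (1:ℝ) else 0))
          = I v ^ 3 - ∑ c ∈ T.children v, I v * I c ^ 2 := by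
      intro v
      have hIc : ∀ w : Fin n, (T.subSize w : ℝ) = I w := fun _ => rfl
      rw [T.pair_count v, mul_sub, Finset.mul_sum]
      simp only [hIc]
      congr 1
      ring
    simp only [h2]
    rw [Finset.sum_sub_distrib]
  -- A - B = n^3
  have hroot : I T.root = (n : ℝ) := by simp [hI, T.subSize_root]
  have hAB : A - B = (n : ℝ) ^ 3 := by
    have hfe : (Finset.univ.filter (· ≠ T.root)) = Finset.univ.erase T.root := by
      ext u; simp [Finset.mem_erase]
    have h5 : I T.root ^ 3 + ∑ x ∈ Finset.univ.erase T.root, I x ^ 3 = ∑ v : Fin n, I v ^ 3 :=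
      Finset.add_sum_erase Finset.univ (fun v => I v ^ 3) (Finset.mem_univ T.root)
    rw [hA, hB, hfe, ← h5, hroot]
    ring
  -- C = reindexed, and 3C ≤ A + 2B
  have hCB : 3 * C ≤ A + 2 * B := by
    have hper : ∀ v : Fin n, 3 * ∑ c ∈ T.children v, I v * I c ^ 2
        ≤ I v ^ 3 + 2 * ∑ c ∈ T.children v, I c ^ 3 := by
      intro v
      have hsum : ∑ c ∈ T.children v, I c ≤ I v := by
        rw [hI]
        push_cast [← Nat.cast_sum]
        exact_mod_cast T.sum_children_subSize_le v
      exact ParentTree.cube_ineq (hInn v) (fun c _ => hInn c) hsum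
    have h3 : 3 * C ≤ A + 2 * ∑ v : Fin n, ∑ c ∈ T.children v, I c ^ 3 := by
      rw [hC, Finset.mul_sum, hA, Finset.mul_sum, ← Finset.sum_add_distrib]
      exact Finset.sum_le_sum fun v _ => hper v
    have h4 : ∑ v : Fin n, ∑ c ∈ T.children v, I c ^ 3 = B := by
      rw [hB]; exact T.sum_children_reindex (fun w => I w ^ 3)
    rw [h4] at h3
    exact h3
  -- conclude S ≥ (2/3) n^3
  have hSge : (2/3 : ℝ) * (n : ℝ) ^ 3 ≤ S := by
    rw [hS]; linarith
  have hnpos : (0 : ℝ) < (n : ℝ) := by exact_mod_cast hn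
  calc (2/3 : ℝ) * n = (1 / (n : ℝ) ^ 2) * ((2/3 : ℝ) * (n : ℝ) ^ 3) := by
        field_simp
    _ ≤ (1 / (n : ℝ) ^ 2) * S := by
        apply mul_le_mul_of_nonneg_left hSge (by positivity)
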